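/- For a single node i (with m_{ii}(G) ≠ 0), the intercentrality satisfies d_{\{i\}}(G,θ) = b_i(G,1)·b_i(G,θ)/m_{ii}(G), where m_{ii}(G) is the (i,i) entry of (I - δG)^{-1}. -/
import Mathlib


open Matrix

theorem single_node_intercentrality {n : ℕ} (G : Matrix (Fin n) (Fin n) ℝ) (δ : ℝ)
    (θ : Fin n → ℝ) (i : Fin n) (hsym : G.IsSymm) (h1 : IsUnit (1 - δ • G))
    (h2 : IsUnit (1 - δ • G.submatrix (Subtype.val : {x : Fin n // x ≠ i} → Fin n) (Subtype.val : {x : Fin n // x ≠ i} → Fin n)))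
    (hm : ((1 - δ • G)⁻¹) i i ≠ 0) :
    ((∑ j, ((1 - δ • G)⁻¹ *ᵥ θ) j)
        - ∑ j : {x : Fin n // x ≠ i},
            ((1 - δ • G.submatrix (Subtype.val : {x : Fin n // x ≠ i} → Fin n) (Subtype.val : {x : Fin n // x ≠ i} → Fin n))⁻¹ *ᵥ
              fun a => θ a.val) j)
      = ((1 - δ • G)⁻¹ *ᵥ fun _ => 1) i * ((1 - δ • G)⁻¹ *ᵥ θ) i / ((1 - δ • G)⁻¹) i i := by
  classical
  set A : Matrix (Fin n) (Fin n) ℝ := 1 - δ • G with hA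
  set M : Matrix (Fin n) (Fin n) ℝ := A⁻¹ with hMdef
  have hdet : IsUnit A.det := (Matrix.isUnit_iff_isUnit_det A).mp h1
  have hAM : A * M = 1 := Matrix.mul_nonsing_inv A hdet
  have hAsym : Aᵀ = A := by
    simp [hA, Matrix.transpose_sub, Matrix.transpose_smul, hsym.eq]
  have hMsym : ∀ j k, M j k = M k j := by
    intro j k
    have h : Mᵀ = M := by
      rw [hMdef, Matrix.transpose_nonsing_inv, hAsym]
    calc M j k = Mᵀ k j := rfl
    _ = M k j := by rw [h]
  have hsubmem : ∀ x : Fin n, x ∈ ({i}ᶜ : Finset (Fin n)) ↔ x ≠ i := by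
    intro x; simp
  have hsubsum : ∀ f : Fin n → ℝ,
      ∑ j : {x : Fin n // x ≠ i}, f j.val = ∑ j ∈ ({i}ᶜ : Finset (Fin n)), f j := by
    intro f
    exact (Finset.sum_subtype _ hsubmem f).symm
  -- the submatrix in the statement equals submatrix of A
  have hsub : (1 - δ • G.submatrix (Subtype.val : {x : Fin n // x ≠ i} → Fin n)
      (Subtype.val : {x : Fin n // x ≠ i} → Fin n))
      = A.submatrix Subtype.val Subtype.val := by
    ext j k
    by_cases h : j = k
    · subst h; simp [hA, Matrix.one_apply]
    · have h' : (j : Fin n) ≠ (k : Fin n) := fun hv => h (Subtype.ext hv)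
      simp [hA, Matrix.one_apply, h, h']
  -- the explicit inverse of the submatrix
  set N : Matrix {x : Fin n // x ≠ i} {x : Fin n // x ≠ i} ℝ :=
    fun j k => M j.val k.val - M j.val i * M i k.val / M i i with hN
  have key1 : ∀ j k, ∑ l, A j l * M l k = if j = k then (1:ℝ) else 0 := by
    intro j k
    have := congrFun (congrFun hAM j) k
    rwa [Matrix.mul_apply, Matrix.one_apply] at this
  have hmm : M i i ≠ 0 := hm
  have hBN : (A.submatrix Subtype.val Subtype.val) * N = 1 := by
    ext j k
    rw [Matrix.mul_apply, Matrix.one_apply]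
    have e1 : A j.val i * M i k.val + ∑ l ∈ ({i}ᶜ : Finset (Fin n)), A j.val l * M l k.val
        = if j.val = k.val then (1:ℝ) else 0 :=
      (Fintype.sum_eq_add_sum_compl i fun l => A j.val l * M l k.val).symm.trans
        (key1 j.val k.val)
    have e2 : A j.val i * M i i + ∑ l ∈ ({i}ᶜ : Finset (Fin n)), A j.val l * M l i = 0 := by
      have := (Fintype.sum_eq_add_sum_compl i fun l => A j.val l * M l i).symm.trans
        (key1 j.val i)
      rwa [if_neg j.prop] at this
    have hsum : ∑ l : {x : Fin n // x ≠ i},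
        A.submatrix Subtype.val Subtype.val j l * N l k
        = ∑ l ∈ ({i}ᶜ : Finset (Fin n)), (A j.val l * M l k.val
            - (A j.val l * M l i) * (M i k.val / M i i)) := by
      rw [← hsubsum fun l => A j.val l * M l k.val - (A j.val l * M l i) * (M i k.val / M i i)]
      apply Finset.sum_congr rfl
      intro l _
      simp only [Matrix.submatrix_apply, hN]
      ring
    rw [hsum, Finset.sum_sub_distrib, ← Finset.sum_mul]
    have hP1 : ∑ l ∈ ({i}ᶜ : Finset (Fin n)), A j.val l * M l k.val
        = (if j.val = k.val then (1:ℝ) else 0) - A j.val i * M i k.val := by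
      linarith [e1]
    have hP2 : ∑ l ∈ ({i}ᶜ : Finset (Fin n)), A j.val l * M l i = - (A j.val i * M i i) := by
      linarith [e2]
    rw [hP1, hP2]
    have hif : (if j = k then (1:ℝ) else 0) = (if j.val = k.val then (1:ℝ) else 0) := by
      by_cases h : j = k
      · subst h; simp
      · rw [if_neg h, if_neg (fun hv => h (Subtype.ext hv))]
    rw [hif]
    field_simp
    split <;> ring
  have hBinv : (A.submatrix Subtype.val Subtype.val)⁻¹ = N := Matrix.inv_eq_right_inv hBN
  rw [hsub, hBinv]
  -- scalar abbreviations
  set m : ℝ := M i i with hmdef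
  set t : ℝ := ∑ j ∈ ({i}ᶜ : Finset (Fin n)), M i j with ht
  set v : ℝ := ∑ k ∈ ({i}ᶜ : Finset (Fin n)), M i k * θ k with hv
  set S : ℝ := ∑ j ∈ ({i}ᶜ : Finset (Fin n)), ∑ k ∈ ({i}ᶜ : Finset (Fin n)), M j k * θ k with hS
  have hMv : ∀ j, (M *ᵥ θ) j = ∑ k, M j k * θ k := by
    intro j; simp [Matrix.mulVec, dotProduct]
  have E3a : (M *ᵥ fun _ => (1:ℝ)) i = m + t := by
    simp only [Matrix.mulVec, dotProduct, mul_one]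
    rw [Fintype.sum_eq_add_sum_compl i]
  have E3b : (M *ᵥ θ) i = m * θ i + v := by
    rw [hMv, Fintype.sum_eq_add_sum_compl i]
  have E1 : ∑ j, (M *ᵥ θ) j = (m * θ i + v) + (t * θ i + S) := by
    rw [Fintype.sum_eq_add_sum_compl i, E3b]
    congr 1
    have : ∀ j ∈ ({i}ᶜ : Finset (Fin n)), (M *ᵥ θ) j
        = M i j * θ i + ∑ k ∈ ({i}ᶜ : Finset (Fin n)), M j k * θ k := by
      intro j _
      rw [hMv, Fintype.sum_eq_add_sum_compl i]
      rw [hMsym j i]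
    rw [Finset.sum_congr rfl this, Finset.sum_add_distrib, ← Finset.sum_mul]
  have E2 : ∑ j : {x : Fin n // x ≠ i}, (N *ᵥ fun a => θ a.val) j = S - t * v / m := by
    have inner : ∀ j : {x : Fin n // x ≠ i}, (N *ᵥ fun a => θ a.val) j
        = (∑ k ∈ ({i}ᶜ : Finset (Fin n)), M j.val k * θ k) - M i j.val * (v / m) := by
      intro j
      simp only [Matrix.mulVec, dotProduct, hN]
      rw [hsubsum fun k => (M j.val k - M j.val i * M i k / m) * θ k]
      rw [show (∑ k ∈ ({i}ᶜ : Finset (Fin n)), (M j.val k - M j.val i * M i k / m) * θ k)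
          = (∑ k ∈ ({i}ᶜ : Finset (Fin n)), M j.val k * θ k)
            - M j.val i * (∑ k ∈ ({i}ᶜ : Finset (Fin n)), M i k * θ k) / m from by
        rw [Finset.mul_sum, Finset.sum_div, ← Finset.sum_sub_distrib]
        exact Finset.sum_congr rfl fun k _ => by ring]
      rw [hMsym j.val i, ← hv]
      ring
    rw [show (∑ j : {x : Fin n // x ≠ i}, (N *ᵥ fun a => θ a.val) j)
        = ∑ j : {x : Fin n // x ≠ i},
          ((∑ k ∈ ({i}ᶜ : Finset (Fin n)), M j.val k * θ k) - M i j.val * (v / m)) from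
      Finset.sum_congr rfl fun j _ => inner j]
    rw [hsubsum fun j => (∑ k ∈ ({i}ᶜ : Finset (Fin n)), M j k * θ k) - M i j * (v / m)]
    rw [Finset.sum_sub_distrib, ← Finset.sum_mul, ← hS, ← ht]
    ring
  rw [E1, E2, E3a, E3b]
  field_simp
  ring
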